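/- For all integers r, f ≥ 0 and every a ∈ ℤ: q_{r+a}^{[f | r−f−1]}(x;z|b) = Σ_{k=0}^{f} q_{r−k+a}^{[r−k−1]}(x|b) · (e_k^{[f | k−1−f]}(z | τ^{k−r}b))^⋆, where ⋆ is the substitution b_{−i} ↦ −b_{i+1} for all i ≥ 0. The identity holds for every number of x-variables. -/

import Mathlib

open Finset

noncomputable section

variable {R : Type*} [CommRing R]

/-- The formal power series `1/(1 - x·u)`. -/
def geomSeries (x : R) : PowerSeries R := PowerSeries.mk fun m => x ^ m

/-- `e_u^{[k]}(c)`: the power series `∏_{i=1}^k (1 + c_i u)` for `k ≥ 0`, and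
`∏_{i=1}^{-k} (1 - c_i u)⁻¹` for `k < 0`.  The sequence `c` is read at indices `1, 2, …`. -/
def eSer (k : ℤ) (c : ℕ → R) : PowerSeries R :=
  if 0 ≤ k then ∏ i ∈ Finset.range k.toNat, (1 + PowerSeries.C (c (i + 1)) * PowerSeries.X)
  else ∏ i ∈ Finset.range (-k).toNat, geomSeries (c (i + 1))

/-- `q_u(x) = ∏_{i=1}^n (1 + x_i u)/(1 - x_i u)`, with `n` x-variables. -/
def qSer (n : ℕ) (x : ℕ → R) : PowerSeries R :=
  ∏ i ∈ Finset.range n,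
    ((1 + PowerSeries.C (x (i + 1)) * PowerSeries.X) * geomSeries (x (i + 1)))

/-- The coefficient of `u^m` (`m : ℤ`) of a power series; zero when `m < 0`. -/
def coeffZ (m : ℤ) (φ : PowerSeries R) : R :=
  if 0 ≤ m then PowerSeries.coeff m.toNat φ else 0

/-- `q_m^{[ℓ]}(x|c)`: the coefficient of `u^m` in `q_u(x)·e_u^{[ℓ]}(c)`. -/
def qC (m ℓ : ℤ) (n : ℕ) (x c : ℕ → R) : R := coeffZ m (qSer n x * eSer ℓ c)

/-- `q_m^{[k|ℓ]}(x;z|c)`: the coefficient of `u^m` in `q_u(x)·e_u^{[k]}(z)·e_u^{[ℓ]}(c)`. -/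
def qC2 (m k ℓ : ℤ) (n : ℕ) (x z c : ℕ → R) : R :=
  coeffZ m (qSer n x * eSer k z * eSer ℓ c)

/-- `e_m^{[k]}(c)`. -/
def eC (m k : ℤ) (c : ℕ → R) : R := coeffZ m (eSer k c)

/-- `e_m^{[k|ℓ]}(z|c)`: the coefficient of `u^m` in `e_u^{[k]}(z)·e_u^{[ℓ]}(c)`. -/
def eC2 (m k ℓ : ℤ) (z c : ℕ → R) : R := coeffZ m (eSer k z * eSer ℓ c)

/-- Extension of `b` to all integer indices using the convention `b_{-i} = -b_{i+1}` for
`i ≥ 0`; positive indices are untouched.  This also implements the `⋆` substitution. -/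
def bext (b : ℤ → R) : ℤ → R := fun j => if 0 < j then b j else -b (1 - j)

/-- `ε(0) = 1` and `ε(m) = 2·(-1)^m` for `m ≥ 1`. -/
def pfEps (m : ℕ) : ℤ := if m = 0 then 1 else 2 * (-1) ^ m

/-- The subscript `α_i + Σ_{j>i} m_{ij} − Σ_{j<i} m_{ji}` in the Schur–Pfaffian. -/
def pfIdx {r : ℕ} (α : Fin r → ℤ) (m : Fin r → Fin r → ℕ) (i : Fin r) : ℤ :=
  α i + ∑ j, (if i < j then (m i j : ℤ) else 0) - ∑ j, (if j < i then (m j i : ℤ) else 0)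

/-- The Schur–Pfaffian `Pf[c^{(1)}_{α_1} ⋯ c^{(r)}_{α_r}]`, as the (finitely supported) sum
over tuples of nonnegative integers `(m_{ij})_{1 ≤ i < j ≤ r}`. -/
def schurPf {r : ℕ} (c : Fin r → ℤ → R) (α : Fin r → ℤ) : R :=
  ∑ᶠ m ∈ {m : Fin r → Fin r → ℕ | ∀ i j, ¬ i < j → m i j = 0},
    (∏ i, ∏ j, if i < j then (pfEps (m i j) : R) else 1) * ∏ i, c i (pfIdx α m i)

/-- The alphabet of primed, unmarked and circled numbers. -/
inductive MSTEntry where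
  | prime : ℕ → MSTEntry
  | unmarked : ℕ → MSTEntry
  | circ : ℕ → MSTEntry
deriving DecidableEq

namespace MSTEntry

/-- Whether an entry is circled (`1`) or not (`0`). -/
def isCirc : MSTEntry → ℕ
  | circ _ => 1
  | _ => 0

/-- Key realizing the order `1' < 1 < 2' < 2 < ⋯` within each class. -/
def key : MSTEntry → ℕ
  | prime k => 2 * k - 1
  | unmarked k => 2 * k
  | circ k => k

/-- The numeric value of an entry. -/
def val : MSTEntry → ℕ
  | prime k => k
  | unmarked k => k
  | circ k => k

/-- The total order `1' < 1 < 2' < 2 < ⋯ < 1° < 2° < ⋯` on entries of positive value. -/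
def le (a b : MSTEntry) : Prop :=
  a.isCirc < b.isCirc ∨ (a.isCirc = b.isCirc ∧ a.key ≤ b.key)

end MSTEntry

/-- The shifted Young diagram of a strict partition `λ` of length `r`:
boxes `(i, j)` with `1 ≤ i ≤ r` and `i ≤ j ≤ λ_i + i - 1` (rows and columns 1-indexed). -/
def shiftedDiag (r : ℕ) (lam : ℕ → ℕ) : Set (ℕ × ℕ) :=
  {p | 1 ≤ p.1 ∧ p.1 ≤ r ∧ p.1 ≤ p.2 ∧ p.2 ≤ lam p.1 + p.1 - 1}

/-- `T` is a marked shifted tableau of the flagged strict partition `(λ, f)` whose unmarked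
and primed entries have numeric value at most `n` (normalized to `unmarked 0` off the
diagram). -/
def IsMST (n r : ℕ) (lam f : ℕ → ℕ) (T : ℕ × ℕ → MSTEntry) : Prop :=
  (∀ p, p ∉ shiftedDiag r lam → T p = .unmarked 0) ∧
  (∀ p ∈ shiftedDiag r lam, 1 ≤ (T p).val) ∧
  (∀ i j j', (i, j) ∈ shiftedDiag r lam → (i, j') ∈ shiftedDiag r lam → j ≤ j' →
    (T (i, j)).le (T (i, j'))) ∧
  (∀ i i' j, (i, j) ∈ shiftedDiag r lam → (i', j) ∈ shiftedDiag r lam → i ≤ i' →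
    (T (i, j)).le (T (i', j))) ∧
  (∀ i i' j k k', (i, j) ∈ shiftedDiag r lam → (i', j) ∈ shiftedDiag r lam → i < i' →
    T (i, j) = .unmarked k → T (i', j) = .unmarked k' → k < k') ∧
  (∀ i j j' k k', (i, j) ∈ shiftedDiag r lam → (i, j') ∈ shiftedDiag r lam → j < j' →
    T (i, j) = .prime k → T (i, j') = .prime k' → k < k') ∧
  (∀ i j j' k k', (i, j) ∈ shiftedDiag r lam → (i, j') ∈ shiftedDiag r lam → j < j' →
    T (i, j) = .circ k → T (i, j') = .circ k' → k < k') ∧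
  (∀ p ∈ shiftedDiag r lam, (T p).le (.circ (f p.1))) ∧
  (∀ p ∈ shiftedDiag r lam, ∀ k, (T p = .unmarked k ∨ T p = .prime k) → k ≤ n)

/-- The factor of the weight `(xz|b)^T` contributed by the entry at box `p`.  The convention
`b_{-i} = -b_{i+1}` is implemented by `bext`. -/
def mstFactor (x z : ℕ → R) (b : ℤ → R) (p : ℕ × ℕ) : MSTEntry → R
  | .unmarked k => x k + bext b ((p.2 : ℤ) - (p.1 : ℤ))
  | .prime k => x k - bext b ((p.2 : ℤ) - (p.1 : ℤ))
  | .circ k => z k + bext b ((k : ℤ) + (p.1 : ℤ) - (p.2 : ℤ))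

/-- The weight `(xz|b)^T` of a marked shifted tableau. -/
def mstWeight (r : ℕ) (lam : ℕ → ℕ) (x z : ℕ → R) (b : ℤ → R) (T : ℕ × ℕ → MSTEntry) : R :=
  ∏ i ∈ Finset.range r, ∏ j ∈ Finset.range (lam (i + 1)),
    mstFactor x z b (i + 1, i + 1 + j) (T (i + 1, i + 1 + j))

/-- The flagged factorial Q-function `Q_{λ,f}(x;z|b)`, with `n` x-variables. -/
def Qflag (n r : ℕ) (lam f : ℕ → ℕ) (x z : ℕ → R) (b : ℤ → R) : R :=
  ∑ᶠ T ∈ {T : ℕ × ℕ → MSTEntry | IsMST n r lam f T}, mstWeight r lam x z b T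

/-- Ivanov's factorial Q-function `Q_λ(x|b)`: the case of the zero flag (no circled
entries, so the z-variables do not occur). -/
def QIvanov (n r : ℕ) (lam : ℕ → ℕ) (x : ℕ → R) (b : ℤ → R) : R :=
  Qflag n r lam (fun _ => 0) x (fun _ => 0) b

/-- The skew Young diagram `κ/ν`: boxes `(i, j)` with `1 ≤ i ≤ r`, `ν_i < j ≤ κ_i`. -/
def skewDiag (r : ℕ) (kap nu : ℕ → ℕ) : Set (ℕ × ℕ) :=
  {p | 1 ≤ p.1 ∧ p.1 ≤ r ∧ nu p.1 < p.2 ∧ p.2 ≤ kap p.1}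

/-- `t` is a row-strict flagged tableau of `(κ/ν, f)` (normalized to `0` off the diagram). -/
def IsRST (r : ℕ) (kap nu f : ℕ → ℕ) (t : ℕ × ℕ → ℕ) : Prop :=
  (∀ p, p ∉ skewDiag r kap nu → t p = 0) ∧
  (∀ p ∈ skewDiag r kap nu, 1 ≤ t p) ∧
  (∀ i j j', (i, j) ∈ skewDiag r kap nu → (i, j') ∈ skewDiag r kap nu → j < j' →
    t (i, j) < t (i, j')) ∧
  (∀ i i' j, (i, j) ∈ skewDiag r kap nu → (i', j) ∈ skewDiag r kap nu → i ≤ i' →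
    t (i, j) ≤ t (i', j)) ∧
  (∀ p ∈ skewDiag r kap nu, t p ≤ f p.1)

/-- The weight `∏_{e ∈ T} (z_{|e|} + b_{|e| + r(e) - c(e)})` of a row-strict flagged tableau. -/
def rstWeight (r : ℕ) (kap nu : ℕ → ℕ) (z : ℕ → R) (b : ℤ → R) (t : ℕ × ℕ → ℕ) : R :=
  ∏ i ∈ Finset.range r, ∏ j ∈ Finset.range (kap (i + 1) - nu (i + 1)),
    (z (t (i + 1, nu (i + 1) + 1 + j)) +
      b ((t (i + 1, nu (i + 1) + 1 + j) : ℤ) + ((i : ℤ) + 1) - ((nu (i + 1) : ℤ) + 1 + (j : ℤ))))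

/-- The row-strict flagged skew factorial Schur polynomial `s̃_{κ/ν,f}(z|b)`. -/
def sTilde (r : ℕ) (kap nu f : ℕ → ℕ) (z : ℕ → R) (b : ℤ → R) : R :=
  ∑ᶠ t ∈ {t : ℕ × ℕ → ℕ | IsRST r kap nu f t}, rstWeight r kap nu z b t


namespace Statement7Aux

open PowerSeries

lemma geom_eq (c : R) :
    geomSeries c = 1 + (PowerSeries.C c * PowerSeries.X) * geomSeries c := by
  ext n
  rw [map_add]
  cases n with
  | zero => simp [geomSeries]
  | succ n =>
    have h1 : (PowerSeries.C c * PowerSeries.X) * geomSeries c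
        = (PowerSeries.C c * geomSeries c) * PowerSeries.X := by ring
    rw [h1, PowerSeries.coeff_succ_mul_X, PowerSeries.coeff_C_mul]
    simp only [geomSeries, PowerSeries.coeff_mk, PowerSeries.coeff_one, Nat.succ_ne_zero,
      if_false]
    rw [zero_add, pow_succ, mul_comm]

lemma geom_mul (c : R) :
    geomSeries c * (1 + PowerSeries.C (-c) * PowerSeries.X) = 1 := by
  have h := geom_eq c
  have : geomSeries c * (1 + PowerSeries.C (-c) * PowerSeries.X)
      = geomSeries c - (PowerSeries.C c * PowerSeries.X) * geomSeries c := by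
    simp only [map_neg]; ring
  rw [this]
  nth_rewrite 1 [h]
  ring

lemma constCoeff_eSer (k : ℤ) (c : ℕ → R) :
    PowerSeries.constantCoeff (eSer k c) = 1 := by
  unfold eSer
  split <;>
  · rw [map_prod]
    apply Finset.prod_eq_one
    intro i _
    simp [geomSeries, PowerSeries.constantCoeff_mk]

lemma isUnit_eSer (k : ℤ) (c : ℕ → R) : IsUnit (eSer k c) :=
  PowerSeries.isUnit_iff_constantCoeff.mpr (by rw [constCoeff_eSer]; exact isUnit_one)

lemma bext_neg (b : ℤ → R) (j : ℤ) : bext b (1 - j) = - bext b j := by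
  unfold bext
  split_ifs with h1 h2 h2
  · omega
  · simp
  · have : 1 - (1 - j) = j := by ring
    rw [this]
  · omega

lemma eSer_nonpos (b : ℕ → R) (ℓ : ℤ) (hℓ : ℓ ≤ 0) :
    eSer ℓ b = ∏ i ∈ Finset.range (-ℓ).toNat, geomSeries (b (i + 1)) := by
  unfold eSer
  rcases eq_or_lt_of_le hℓ with h | h
  · subst h; simp
  · rw [if_neg (by omega)]

lemma eSer_step (b : ℤ → R) (ℓ : ℤ) :
    eSer ℓ (fun i => b (i : ℤ)) =
      eSer (ℓ - 1) (fun i => b (i : ℤ)) * (1 + PowerSeries.C (bext b ℓ) * PowerSeries.X) := by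
  rcases le_or_gt ℓ 0 with hℓ | hℓ
  · rw [eSer_nonpos _ ℓ hℓ, eSer_nonpos _ (ℓ - 1) (by omega)]
    have h1 : (-(ℓ - 1)).toNat = (-ℓ).toNat + 1 := by omega
    rw [h1]
    simp only [Finset.prod_range_succ, mul_assoc]
    have h2 : (((-ℓ).toNat : ℤ) + 1) = 1 - ℓ := by omega
    have h3 : bext b ℓ = - b (1 - ℓ) := by unfold bext; rw [if_neg (by omega)]
    simp only [Nat.cast_add, Nat.cast_one, h2, h3]
    have h4 : geomSeries (b (1 - ℓ)) * (1 + PowerSeries.C (-b (1 - ℓ)) * PowerSeries.X) = 1 :=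
      geom_mul _
    rw [h4, mul_one]
  · unfold eSer
    rw [if_pos (by omega), if_pos (by omega)]
    have h1 : ℓ.toNat = (ℓ - 1).toNat + 1 := by omega
    rw [h1]
    simp only [Finset.prod_range_succ]
    have h2 : (((ℓ - 1).toNat : ℤ) + 1) = ℓ := by omega
    have h3 : bext b ℓ = b ℓ := by unfold bext; rw [if_pos hℓ]
    simp only [Nat.cast_add, Nat.cast_one, h2, h3]

lemma eSer_tel (b : ℤ → R) (ℓ : ℤ) (d : ℕ) :
    eSer ℓ (fun i => b (i : ℤ)) =
      eSer (ℓ - d) (fun i => b (i : ℤ)) *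
        ∏ i ∈ Finset.range d, (1 + PowerSeries.C (bext b (ℓ - i)) * PowerSeries.X) := by
  induction d with
  | zero => simp
  | succ d ih =>
    simp only [Finset.prod_range_succ]
    rw [← mul_assoc, mul_right_comm,
      show ℓ - ((d + 1 : ℕ) : ℤ) = ℓ - (d : ℤ) - 1 by push_cast; ring,
      ← eSer_step b (ℓ - (d : ℤ)), ← ih]

lemma c_rel (b : ℤ → R) (r : ℤ) (k f : ℕ) (hk : k ≤ f) :
    eSer ((k : ℤ) - 1 - (f : ℤ)) (fun i => bext b ((i : ℤ) + (k : ℤ) - r)) *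
        eSer (r - (k : ℤ)) (fun i => b (i : ℤ)) =
      eSer (r - (f : ℤ) - 1) (fun i => b (i : ℤ)) := by
  have h1 : eSer (r - (k : ℤ)) (fun i => b (i : ℤ)) =
      eSer (r - (f : ℤ) - 1) (fun i => b (i : ℤ)) *
        ∏ i ∈ Finset.range (f + 1 - k),
          (1 + PowerSeries.C (bext b (r - (k : ℤ) - i)) * PowerSeries.X) := by
    have := eSer_tel b (r - (k : ℤ)) (f + 1 - k)
    rwa [show r - (k : ℤ) - ((f + 1 - k : ℕ) : ℤ) = r - (f : ℤ) - 1 by omega] at this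
  have h2 : eSer ((k : ℤ) - 1 - (f : ℤ)) (fun i => bext b ((i : ℤ) + (k : ℤ) - r)) =
      ∏ i ∈ Finset.range (f + 1 - k), geomSeries (bext b ((i : ℤ) + 1 + (k : ℤ) - r)) := by
    rw [eSer_nonpos _ _ (by omega)]
    rw [show (-((k : ℤ) - 1 - (f : ℤ))).toNat = f + 1 - k by omega]
    apply Finset.prod_congr rfl
    intro i _
    have hcast : ((i + 1 : ℕ) : ℤ) + (k : ℤ) - r = (i : ℤ) + 1 + (k : ℤ) - r := by
      push_cast; ring
    simp only [hcast]
  rw [h1, h2]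
  rw [mul_comm (eSer (r - (f : ℤ) - 1) fun i => b (i : ℤ)) _, ← mul_assoc,
    ← Finset.prod_mul_distrib]
  have h3 : ∀ i ∈ Finset.range (f + 1 - k),
      geomSeries (bext b ((i : ℤ) + 1 + (k : ℤ) - r)) *
        (1 + PowerSeries.C (bext b (r - (k : ℤ) - i)) * PowerSeries.X) = 1 := by
    intro i _
    have h4 : bext b (r - (k : ℤ) - i) = - bext b ((i : ℤ) + 1 + (k : ℤ) - r) := by
      have := bext_neg b ((i : ℤ) + 1 + (k : ℤ) - r)
      rwa [show 1 - ((i : ℤ) + 1 + (k : ℤ) - r) = r - (k : ℤ) - i by ring] at this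
    rw [h4]
    exact geom_mul _
  rw [Finset.prod_congr rfl h3, Finset.prod_const_one, one_mul]

lemma coeff_mul_one_add (n : ℕ) (φ : PowerSeries R) (β : R) :
    PowerSeries.coeff (n + 1) (φ * (1 + PowerSeries.C β * PowerSeries.X)) =
      PowerSeries.coeff (n + 1) φ + β * PowerSeries.coeff n φ := by
  have h1 : φ * (1 + PowerSeries.C β * PowerSeries.X)
      = φ + (φ * PowerSeries.X) * PowerSeries.C β := by ring
  rw [h1, map_add, PowerSeries.coeff_mul_C, PowerSeries.coeff_succ_mul_X, mul_comm]

lemma key (b : ℤ → R) :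
    ∀ f : ℕ, ∀ r : ℤ, ∀ g : Polynomial R, g.natDegree ≤ f →
    ∀ G : ℕ → PowerSeries R,
    (∀ k ≤ f, G k * eSer (r - (k : ℤ)) (fun i => b (i : ℤ)) =
      (g : PowerSeries R) * eSer (r - (f : ℤ) - 1) (fun i => b (i : ℤ))) →
    (g : PowerSeries R) * eSer (r - (f : ℤ) - 1) (fun i => b (i : ℤ)) =
      ∑ k ∈ Finset.range (f + 1),
        PowerSeries.C (PowerSeries.coeff k (G k)) * PowerSeries.X ^ k *
          eSer (r - (k : ℤ) - 1) (fun i => b (i : ℤ)) := by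
  intro f
  induction f with
  | zero =>
    intro r g hg G hG
    have hg0 : g = Polynomial.C (g.coeff 0) := Polynomial.eq_C_of_natDegree_le_zero hg
    have hG0 := hG 0 le_rfl
    have hc : PowerSeries.coeff 0 (G 0) = g.coeff 0 := by
      have h := congrArg (PowerSeries.constantCoeff) hG0
      simp only [map_mul, constCoeff_eSer, mul_one] at h
      rw [PowerSeries.coeff_zero_eq_constantCoeff, h,
        ← PowerSeries.coeff_zero_eq_constantCoeff, Polynomial.coeff_coe]
    simp only [zero_add, Finset.sum_range_one, Nat.cast_zero, pow_zero, mul_one, hc]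
    conv_lhs => rw [hg0, Polynomial.coe_C]
  | succ f ih =>
    intro r g hg G hG
    set β := bext b (r - (f : ℤ) - 1) with hβ
    have hstep : eSer (r - (f : ℤ) - 1) (fun i => b (i : ℤ)) =
        eSer (r - (f : ℤ) - 2) (fun i => b (i : ℤ)) *
          (1 + PowerSeries.C β * PowerSeries.X) := by
      have := eSer_step b (r - (f : ℤ) - 1)
      rwa [show r - (f : ℤ) - 1 - 1 = r - (f : ℤ) - 2 by ring] at this
    have hGf1 : G (f + 1) * eSer (r - (f : ℤ) - 1) (fun i => b (i : ℤ)) =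
        (g : PowerSeries R) * eSer (r - (f : ℤ) - 2) (fun i => b (i : ℤ)) := by
      have := hG (f + 1) le_rfl
      rwa [show r - ((f + 1 : ℕ) : ℤ) - 1 = r - (f : ℤ) - 2 by push_cast; ring,
        show r - ((f + 1 : ℕ) : ℤ) = r - (f : ℤ) - 1 by push_cast; ring] at this
    have hGg : G (f + 1) * (1 + PowerSeries.C β * PowerSeries.X) = (g : PowerSeries R) := by
      apply (isUnit_eSer (r - (f : ℤ) - 2) (fun i => b (i : ℤ))).mul_right_cancel
      calc G (f + 1) * (1 + PowerSeries.C β * PowerSeries.X) *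
            eSer (r - (f : ℤ) - 2) (fun i => b (i : ℤ))
          = G (f + 1) * (eSer (r - (f : ℤ) - 2) (fun i => b (i : ℤ)) *
              (1 + PowerSeries.C β * PowerSeries.X)) := by ring
        _ = G (f + 1) * eSer (r - (f : ℤ) - 1) (fun i => b (i : ℤ)) := by rw [← hstep]
        _ = (g : PowerSeries R) * eSer (r - (f : ℤ) - 2) (fun i => b (i : ℤ)) := hGf1
    set A := PowerSeries.coeff (f + 1) (G (f + 1)) with hA
    have claim1 : ∀ j : ℕ, PowerSeries.coeff (f + 1 + j) (G (f + 1)) = (-β) ^ j * A := by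
      intro j
      induction j with
      | zero => simp [hA]
      | succ j ihj =>
        have hgz : PowerSeries.coeff (f + 1 + j + 1) (g : PowerSeries R) = 0 := by
          rw [Polynomial.coeff_coe]
          exact Polynomial.coeff_eq_zero_of_natDegree_lt (by omega)
        have := coeff_mul_one_add (f + 1 + j) (G (f + 1)) β
        rw [hGg, hgz, ihj] at this
        have h5 : PowerSeries.coeff (f + 1 + j + 1) (G (f + 1)) = -(β * ((-β) ^ j * A)) := by
          linear_combination -this
        rw [show f + 1 + (j + 1) = f + 1 + j + 1 by ring, h5]
        ring
    set H := G (f + 1) -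
        PowerSeries.C A * PowerSeries.X ^ (f + 1) * geomSeries (-β) with hH
    have claim2 : ∀ m : ℕ, f + 1 ≤ m → PowerSeries.coeff m H = 0 := by
      intro m hm
      obtain ⟨j, rfl⟩ : ∃ j, m = f + 1 + j := ⟨m - (f + 1), by omega⟩
      rw [hH, map_sub, claim1 j]
      have h6 : PowerSeries.coeff (f + 1 + j)
          (PowerSeries.C A * PowerSeries.X ^ (f + 1) * geomSeries (-β)) = A * (-β) ^ j := by
        rw [mul_assoc, PowerSeries.coeff_C_mul,
          show f + 1 + j = j + (f + 1) by ring, PowerSeries.coeff_X_pow_mul]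
        simp [geomSeries]
      rw [h6]; ring
    set h := PowerSeries.trunc (f + 1) H with hhdef
    have hh : (h : PowerSeries R) = H := by
      ext m
      rw [Polynomial.coeff_coe, hhdef, PowerSeries.coeff_trunc]
      split_ifs with hm
      · rfl
      · exact (claim2 m (by omega)).symm
    have hdeg : h.natDegree ≤ f := by
      by_cases h0 : h = 0
      · rw [h0]; simp
      · have := PowerSeries.degree_trunc_lt H (f + 1)
        rw [← hhdef] at this
        have := (Polynomial.natDegree_lt_iff_degree_lt h0).mpr this
        omega
    have hgeom : geomSeries (-β) * (1 + PowerSeries.C β * PowerSeries.X) = 1 := by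
      have := geom_mul (-β)
      rwa [neg_neg] at this
    have hH1 : (h : PowerSeries R) * (1 + PowerSeries.C β * PowerSeries.X) =
        (g : PowerSeries R) - PowerSeries.C A * PowerSeries.X ^ (f + 1) := by
      rw [hh, hH]
      calc (G (f + 1) - PowerSeries.C A * PowerSeries.X ^ (f + 1) * geomSeries (-β)) *
            (1 + PowerSeries.C β * PowerSeries.X)
          = G (f + 1) * (1 + PowerSeries.C β * PowerSeries.X) -
            PowerSeries.C A * PowerSeries.X ^ (f + 1) *
              (geomSeries (-β) * (1 + PowerSeries.C β * PowerSeries.X)) := by ring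
        _ = (g : PowerSeries R) - PowerSeries.C A * PowerSeries.X ^ (f + 1) := by
            rw [hGg, hgeom, mul_one]
    have hmain : (h : PowerSeries R) * eSer (r - (f : ℤ) - 1) (fun i => b (i : ℤ)) =
        (g : PowerSeries R) * eSer (r - (f : ℤ) - 2) (fun i => b (i : ℤ)) -
          PowerSeries.C A * PowerSeries.X ^ (f + 1) *
            eSer (r - (f : ℤ) - 2) (fun i => b (i : ℤ)) := by
      rw [hstep]
      calc (h : PowerSeries R) * (eSer (r - (f : ℤ) - 2) (fun i => b (i : ℤ)) *
            (1 + PowerSeries.C β * PowerSeries.X))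
          = ((h : PowerSeries R) * (1 + PowerSeries.C β * PowerSeries.X)) *
            eSer (r - (f : ℤ) - 2) (fun i => b (i : ℤ)) := by ring
        _ = ((g : PowerSeries R) - PowerSeries.C A * PowerSeries.X ^ (f + 1)) *
            eSer (r - (f : ℤ) - 2) (fun i => b (i : ℤ)) := by rw [hH1]
        _ = (g : PowerSeries R) * eSer (r - (f : ℤ) - 2) (fun i => b (i : ℤ)) -
            PowerSeries.C A * PowerSeries.X ^ (f + 1) *
              eSer (r - (f : ℤ) - 2) (fun i => b (i : ℤ)) := by ring
    set G' : ℕ → PowerSeries R := fun k =>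
      G k - PowerSeries.C A * PowerSeries.X ^ (f + 1) *
        eSer ((k : ℤ) - 1 - ((f + 1 : ℕ) : ℤ)) (fun i => bext b ((i : ℤ) + (k : ℤ) - r))
      with hG'
    have hG'cond : ∀ k ≤ f, G' k * eSer (r - (k : ℤ)) (fun i => b (i : ℤ)) =
        (h : PowerSeries R) * eSer (r - (f : ℤ) - 1) (fun i => b (i : ℤ)) := by
      intro k hk
      have hc := c_rel b r k (f + 1) (by omega)
      simp only [hG']
      rw [sub_mul, hG k (by omega), mul_assoc, hc, hmain,
        show r - ((f + 1 : ℕ) : ℤ) - 1 = r - (f : ℤ) - 2 by push_cast; ring]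
    have ihh := ih r h hdeg G' hG'cond
    have hcoeffG' : ∀ k ∈ Finset.range (f + 1),
        PowerSeries.C (PowerSeries.coeff k (G' k)) * PowerSeries.X ^ k *
          eSer (r - (k : ℤ) - 1) (fun i => b (i : ℤ)) =
        PowerSeries.C (PowerSeries.coeff k (G k)) * PowerSeries.X ^ k *
          eSer (r - (k : ℤ) - 1) (fun i => b (i : ℤ)) := by
      intro k hk
      rw [Finset.mem_range] at hk
      have hcc : PowerSeries.coeff k (G' k) = PowerSeries.coeff k (G k) := by
        simp only [hG', map_sub, mul_assoc, PowerSeries.coeff_C_mul,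
          PowerSeries.coeff_X_pow_mul']
        rw [if_neg (by omega), mul_zero, sub_zero]
      rw [hcc]
    rw [Finset.sum_congr rfl hcoeffG'] at ihh
    rw [Finset.sum_range_succ, ← ihh,
      show r - ((f + 1 : ℕ) : ℤ) - 1 = r - (f : ℤ) - 2 by push_cast; ring, ← hA, hmain]
    ring

lemma eId (b : ℤ → R) (z : ℕ → R) (f : ℕ) (r : ℤ) :
    eSer (f : ℤ) z * eSer (r - (f : ℤ) - 1) (fun i => b (i : ℤ)) =
      ∑ k ∈ Finset.range (f + 1),
        PowerSeries.C (PowerSeries.coeff k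
            (eSer (f : ℤ) z *
              eSer ((k : ℤ) - 1 - (f : ℤ)) (fun i => bext b ((i : ℤ) + (k : ℤ) - r)))) *
          PowerSeries.X ^ k * eSer (r - (k : ℤ) - 1) (fun i => b (i : ℤ)) := by
  set g : Polynomial R :=
    ∏ i ∈ Finset.range f, (1 + Polynomial.C (z (i + 1)) * Polynomial.X) with hgdef
  have hcoe : (g : PowerSeries R) = eSer (f : ℤ) z := by
    rw [hgdef, ← Polynomial.coeToPowerSeries.ringHom_apply, map_prod]
    unfold eSer
    rw [if_pos (Int.natCast_nonneg f), Int.toNat_natCast]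
    apply Finset.prod_congr rfl
    intro i _
    simp [Polynomial.coeToPowerSeries.ringHom_apply, Polynomial.coe_add, Polynomial.coe_mul,
      Polynomial.coe_C, Polynomial.coe_X, Polynomial.coe_one]
  have hdeg : g.natDegree ≤ f := by
    refine le_trans (Polynomial.natDegree_prod_le _ _) ?_
    calc ∑ i ∈ Finset.range f, (1 + Polynomial.C (z (i + 1)) * Polynomial.X).natDegree
        ≤ ∑ _i ∈ Finset.range f, 1 := by
          apply Finset.sum_le_sum
          intro i _
          compute_degree
      _ = f := by simp
  have hcond : ∀ k ≤ f,
      (eSer (f : ℤ) z *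
          eSer ((k : ℤ) - 1 - (f : ℤ)) (fun i => bext b ((i : ℤ) + (k : ℤ) - r))) *
        eSer (r - (k : ℤ)) (fun i => b (i : ℤ)) =
      (g : PowerSeries R) * eSer (r - (f : ℤ) - 1) (fun i => b (i : ℤ)) := by
    intro k hk
    rw [hcoe, mul_assoc, c_rel b r k f hk]
  have := key b f r g hdeg
    (fun k => eSer (f : ℤ) z *
      eSer ((k : ℤ) - 1 - (f : ℤ)) (fun i => bext b ((i : ℤ) + (k : ℤ) - r))) hcond
  rwa [hcoe] at this

end Statement7Aux

/-- For all `r, f ≥ 0` and `a ∈ ℤ`: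
`q_{r+a}^{[f|r−f−1]}(x;z|b) = Σ_{k=0}^{f} q_{r−k+a}^{[r−k−1]}(x|b) ·
(e_k^{[f|k−1−f]}(z|τ^{k−r}b))^⋆`, for every number `n` of x-variables. -/
theorem statement_7 (R : Type*) [CommRing R] (n r f : ℕ) (a : ℤ)
    (x z : ℕ → R) (b : ℤ → R) :
    qC2 ((r : ℤ) + a) (f : ℤ) ((r : ℤ) - (f : ℤ) - 1) n x z (fun i => b (i : ℤ)) =
      ∑ k ∈ Finset.range (f + 1),
        qC ((r : ℤ) - (k : ℤ) + a) ((r : ℤ) - (k : ℤ) - 1) n x (fun i => b (i : ℤ)) *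
          eC2 (k : ℤ) (f : ℤ) ((k : ℤ) - 1 - (f : ℤ)) z
            (fun i => bext b ((i : ℤ) + (k : ℤ) - (r : ℤ))) := by
  classical
  simp only [qC2, qC, eC2, coeffZ]
  by_cases hra : 0 ≤ (r : ℤ) + a
  · rw [if_pos hra, mul_assoc, Statement7Aux.eId b z f (r : ℤ), Finset.mul_sum, map_sum]
    apply Finset.sum_congr rfl
    intro k hk
    rw [Finset.mem_range] at hk
    have hcomm : qSer n x *
        (PowerSeries.C (PowerSeries.coeff k
            (eSer (f : ℤ) z *
              eSer ((k : ℤ) - 1 - (f : ℤ)) (fun i => bext b ((i : ℤ) + (k : ℤ) - (r : ℤ))))) *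
          PowerSeries.X ^ k * eSer ((r : ℤ) - (k : ℤ) - 1) (fun i => b (i : ℤ))) =
        PowerSeries.C (PowerSeries.coeff k
            (eSer (f : ℤ) z *
              eSer ((k : ℤ) - 1 - (f : ℤ)) (fun i => bext b ((i : ℤ) + (k : ℤ) - (r : ℤ))))) *
          (PowerSeries.X ^ k *
            (qSer n x * eSer ((r : ℤ) - (k : ℤ) - 1) (fun i => b (i : ℤ)))) := by ring
    rw [hcomm, PowerSeries.coeff_C_mul, PowerSeries.coeff_X_pow_mul',
      if_pos (Int.natCast_nonneg k), Int.toNat_natCast]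
    by_cases hk2 : 0 ≤ (r : ℤ) - (k : ℤ) + a
    · rw [if_pos hk2, if_pos (show k ≤ ((r : ℤ) + a).toNat by omega)]
      rw [show ((r : ℤ) + a).toNat - k = ((r : ℤ) - (k : ℤ) + a).toNat by omega, mul_comm]
    · rw [if_neg hk2, if_neg (show ¬ k ≤ ((r : ℤ) + a).toNat by omega), mul_zero, zero_mul]
  · rw [if_neg hra]
    symm
    apply Finset.sum_eq_zero
    intro k hk
    rw [if_neg (show ¬ 0 ≤ (r : ℤ) - (k : ℤ) + a by omega), zero_mul]
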